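/- For all real numbers β > 0, C > 0 and D > 0, there exist a natural number ℓ ≥ 2 and a real number t > 0 such that D·exp( −2β·exp(−2ℓ·log ℓ)·t ) > C·ℓ²·(log(2 + t))^{−2}. -/

import Mathlib

open Real

/-- Quasinormal modes with `Im ω = −β e^{−2ℓ log ℓ}` are incompatible with a uniform
energy-decay estimate with rate `g(t) = (log(2+t))^{−2}`: for any constants
`β, C, D > 0` there are `ℓ ≥ 2` and `t > 0` with
`D·exp(−2β e^{−2ℓ log ℓ} t) > C ℓ² (log(2+t))^{−2}`. -/
theorem stmt12 (β C D : ℝ) (hβ : 0 < β) (hC : 0 < C) (hD : 0 < D) :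
    ∃ (ℓ : ℕ) (t : ℝ), 2 ≤ ℓ ∧ 0 < t ∧
      D * Real.exp (-(2 * β) * Real.exp (-(2 * (ℓ : ℝ) * Real.log ℓ)) * t) >
        C * (ℓ : ℝ) ^ 2 * (Real.log (2 + t)) ^ (-2 : ℤ) := by
  have hE : 0 < Real.exp 1 := Real.exp_pos 1
  set A : ℝ := max |Real.log (2 * β)| (Real.sqrt (Real.exp 1 * C / D) + 1) with hAdef
  have hA1 : 1 ≤ A := le_trans (by nlinarith [Real.sqrt_nonneg (Real.exp 1 * C / D)]) (le_max_right _ _)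
  set ℓ : ℕ := ⌈Real.exp A⌉₊ + 2 with hldef
  set l : ℝ := (ℓ : ℝ) with hldef2
  have hl2 : (2 : ℝ) ≤ l := by
    have h : (2 : ℕ) ≤ ℓ := by omega
    rw [hldef2]; exact_mod_cast h
  have hl0 : 0 < l := by linarith
  have hexpA : Real.exp A ≤ l := by
    have h1 : Real.exp A ≤ (⌈Real.exp A⌉₊ : ℝ) := Nat.le_ceil _
    have h2 : ((⌈Real.exp A⌉₊ : ℕ) : ℝ) ≤ l := by
      rw [hldef2, hldef]; push_cast; linarith
    linarith
  have hAlog : A ≤ Real.log l := (Real.le_log_iff_exp_le hl0).2 hexpA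
  have hlog1 : 1 ≤ Real.log l := le_trans hA1 hAlog
  set X : ℝ := 2 * l * Real.log l with hXdef
  set t : ℝ := Real.exp X / (2 * β) with htdef
  have ht0 : 0 < t := by positivity
  refine ⟨ℓ, t, by omega, ht0, ?_⟩
  -- simplify the exponent to -1
  have hexp : -(2 * β) * Real.exp (-(2 * l * Real.log l)) * t = -1 := by
    rw [htdef, Real.exp_neg, ← hXdef]
    field_simp
  rw [← hldef2, hexp]
  set L : ℝ := Real.log (2 + t) with hLdef
  -- lower bound for L
  have hlogt : Real.log t = X - Real.log (2 * β) := by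
    rw [htdef, Real.log_div (Real.exp_ne_zero X) (by positivity), Real.log_exp]
  have hL1 : l * Real.log l ≤ L := by
    have h1 : Real.log t ≤ L := Real.log_le_log ht0 (by linarith)
    have h2 : Real.log (2 * β) ≤ |Real.log (2 * β)| := le_abs_self _
    have h3 : |Real.log (2 * β)| ≤ A := le_max_left _ _
    have h4 : A ≤ l * Real.log l := by
      calc A ≤ Real.log l := hAlog
      _ ≤ l * Real.log l := by nlinarith
    have : l * Real.log l ≤ Real.log t := by
      rw [hlogt, hXdef]; nlinarith
    linarith
  have hL0 : 0 < L := lt_of_lt_of_le (by nlinarith) hL1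
  have hLzpow : L ^ (-2 : ℤ) = (L ^ 2)⁻¹ := by
    rw [zpow_neg]; norm_cast
  rw [hLzpow, gt_iff_lt, Real.exp_neg]
  have h1 : Real.sqrt (Real.exp 1 * C / D) + 1 ≤ Real.log l :=
    le_trans (le_max_right _ _) hAlog
  clear_value A ℓ l X t L
  have hkey : Real.exp 1 * C * l ^ 2 < D * L ^ 2 := by
    have hsq : Real.exp 1 * C / D < (Real.log l) ^ 2 := by
      nlinarith [Real.sq_sqrt (show (0:ℝ) ≤ Real.exp 1 * C / D by positivity),
        Real.sqrt_nonneg (Real.exp 1 * C / D)]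
    have hECD : Real.exp 1 * C < D * (Real.log l) ^ 2 := by
      rw [div_lt_iff₀ hD] at hsq; nlinarith [hsq]
    have hLsq : (l * Real.log l) ^ 2 ≤ L ^ 2 :=
      pow_le_pow_left₀ (mul_nonneg hl0.le (by linarith)) hL1 2
    have h2 : D * (l * Real.log l) ^ 2 ≤ D * L ^ 2 :=
      mul_le_mul_of_nonneg_left hLsq hD.le
    have h3 : l ^ 2 * (Real.exp 1 * C) < l ^ 2 * (D * (Real.log l) ^ 2) :=
      mul_lt_mul_of_pos_left hECD (by positivity)
    calc Real.exp 1 * C * l ^ 2 = l ^ 2 * (Real.exp 1 * C) := by ring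
      _ < l ^ 2 * (D * (Real.log l) ^ 2) := h3
      _ = D * (l * Real.log l) ^ 2 := by ring
      _ ≤ D * L ^ 2 := h2
  rw [← div_eq_mul_inv, ← div_eq_mul_inv, div_lt_div_iff₀ (by positivity) hE]
  calc C * l ^ 2 * Real.exp 1 = Real.exp 1 * C * l ^ 2 := by ring
    _ < D * L ^ 2 := hkey
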